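/- Let R be a commutative ring, let M and N be finitely generated projective R-modules, and let d ≥ 0. Then the R-module P^d(M, N) of polynomial laws from M to N that are homogeneous of degree d is a finitely generated projective R-module. -/

import Mathlib

open TensorProduct

universe u

variable (R : Type u) [CommRing R]

/-- The type of families of functions `S ⊗[R] M → S ⊗[R] N`, one for each commutative
`R`-algebra `S` (no naturality required). -/
abbrev RawLaw (M N : Type u) [AddCommGroup M] [Module R M] [AddCommGroup N] [Module R N] :
    Type (u + 1) :=
  ∀ (S : Type u) [CommRing S] [Algebra R S], S ⊗[R] M → S ⊗[R] N

variable (M N : Type u) [AddCommGroup M] [Module R M] [AddCommGroup N] [Module R N]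

/-- Naturality: such a family is a polynomial law (in the sense of Roby) if it commutes
with the maps induced by every `R`-algebra homomorphism. -/
def IsPolyLaw (f : RawLaw R M N) : Prop :=
  ∀ (S S' : Type u) [CommRing S] [Algebra R S] [CommRing S'] [Algebra R S']
    (φ : S →ₐ[R] S') (x : S ⊗[R] M),
    LinearMap.rTensor N φ.toLinearMap (f S x) = f S' (LinearMap.rTensor M φ.toLinearMap x)

/-- Homogeneity of degree `d`. -/
def IsHomog (d : ℕ) (f : RawLaw R M N) : Prop :=
  ∀ (S : Type u) [CommRing S] [Algebra R S] (s : S) (x : S ⊗[R] M),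
    f S (s • x) = s ^ d • f S x

/-- The `R`-module `P^d(M, N)` of polynomial laws from `M` to `N` homogeneous of
degree `d`, as a submodule of the module of raw families. -/
noncomputable def polyLawHomog (d : ℕ) : Submodule R (RawLaw R M N) where
  carrier := {f | IsPolyLaw R M N f ∧ IsHomog R M N d f}
  add_mem' := by
    rintro f g ⟨hf1, hf2⟩ ⟨hg1, hg2⟩
    constructor
    · intro S S' _ _ _ _ φ x
      show LinearMap.rTensor N φ.toLinearMap (f S x + g S x)
          = f S' (LinearMap.rTensor M φ.toLinearMap x) + g S' (LinearMap.rTensor M φ.toLinearMap x)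
      rw [map_add, hf1 S S' φ x, hg1 S S' φ x]
    · intro S _ _ s xx
      show f S (s • xx) + g S (s • xx) = s ^ d • (f S xx + g S xx)
      rw [hf2 S s xx, hg2 S s xx, smul_add]
  zero_mem' := by
    constructor
    · intro S S' _ _ _ _ φ x
      show LinearMap.rTensor N φ.toLinearMap 0 = (0 : S' ⊗[R] N)
      rw [map_zero]
    · intro S _ _ s xx
      show (0 : S ⊗[R] N) = s ^ d • (0 : S ⊗[R] N)
      rw [smul_zero]
  smul_mem' := by
    rintro r f ⟨hf1, hf2⟩
    constructor
    · intro S S' _ _ _ _ φ x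
      show LinearMap.rTensor N φ.toLinearMap (r • f S x)
          = r • f S' (LinearMap.rTensor M φ.toLinearMap x)
      rw [map_smul, hf1 S S' φ x]
    · intro S _ _ s xx
      show r • f S (s • xx) = s ^ d • (r • f S xx)
      rw [hf2 S s xx, smul_comm]

/-!
STATEMENT 3: Let R be a commutative ring, let M and N be finitely generated projective
R-modules, and let d ≥ 0.  Then the R-module P^d(M, N) of polynomial laws from M to N
that are homogeneous of degree d is a finitely generated projective R-module.
-/

/- ### Auxiliary development -/

section Aux

variable {R : Type u} [CommRing R] {M N : Type u} [AddCommGroup M] [Module R M]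
  [AddCommGroup N] [Module R N] {n : ℕ}

/-- Tensor coordinate map associated to a family of linear functionals. -/
noncomputable def coordT (κ : Fin n → (M →ₗ[R] R)) (S : Type u) [CommRing S] [Algebra R S]
    (i : Fin n) : S ⊗[R] M →ₗ[R] S :=
  (TensorProduct.rid R S).toLinearMap ∘ₗ LinearMap.lTensor S (κ i)

lemma coordT_tmul (κ : Fin n → (M →ₗ[R] R)) (S : Type u) [CommRing S] [Algebra R S]
    (i : Fin n) (s : S) (m : M) : coordT κ S i (s ⊗ₜ[R] m) = κ i m • s := by
  simp [coordT, TensorProduct.rid_tmul]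

lemma coordT_smul (κ : Fin n → (M →ₗ[R] R)) (S : Type u) [CommRing S] [Algebra R S]
    (i : Fin n) (s : S) (x : S ⊗[R] M) : coordT κ S i (s • x) = s * coordT κ S i x := by
  induction x using TensorProduct.induction_on with
  | zero => simp
  | tmul a m =>
      rw [TensorProduct.smul_tmul', coordT_tmul, coordT_tmul]
      exact (mul_smul_comm _ _ _).symm
  | add a b ha hb => rw [smul_add, map_add, map_add, ha, hb, mul_add]

lemma coordT_natural (κ : Fin n → (M →ₗ[R] R)) (S S' : Type u) [CommRing S] [Algebra R S]
    [CommRing S'] [Algebra R S'] (φ : S →ₐ[R] S') (i : Fin n) (x : S ⊗[R] M) :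
    φ (coordT κ S i x) = coordT κ S' i (LinearMap.rTensor M φ.toLinearMap x) := by
  induction x using TensorProduct.induction_on with
  | zero => simp
  | tmul a m => rw [coordT_tmul, LinearMap.rTensor_tmul, AlgHom.toLinearMap_apply, coordT_tmul,
      map_smul]
  | add a b ha hb => rw [map_add, map_add, ha, hb, map_add, map_add]

lemma sum_coordT (κ : Fin n → (M →ₗ[R] R)) (e : Fin n → M)
    (hsec : ∀ m : M, ∑ i, κ i m • e i = m) (S : Type u) [CommRing S] [Algebra R S]
    (x : S ⊗[R] M) : ∑ i, (coordT κ S i x) ⊗ₜ[R] e i = x := by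
  induction x using TensorProduct.induction_on with
  | zero => simp
  | tmul s m =>
      have : ∀ i, (coordT κ S i (s ⊗ₜ[R] m)) ⊗ₜ[R] e i = s ⊗ₜ[R] (κ i m • e i) := by
        intro i
        rw [coordT_tmul]; exact TensorProduct.smul_tmul _ _ _
      rw [Finset.sum_congr rfl fun i _ => this i, ← TensorProduct.tmul_sum, hsec]
  | add a b ha hb =>
      simp only [map_add, TensorProduct.add_tmul, Finset.sum_add_distrib, ha, hb]

/-- The index type of multi-indices of total degree `d`. -/
def DegIdx (n d : ℕ) : Type := {α : Fin n →₀ ℕ // α.sum (fun _ k => k) = d}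

lemma DegIdx.le (d : ℕ) (α : DegIdx n d) (i : Fin n) : α.1 i ≤ d := by
  rcases α with ⟨α, hα⟩
  by_cases hi : i ∈ α.support
  · calc α i ≤ ∑ j ∈ α.support, α j := Finset.single_le_sum (fun j _ => Nat.zero_le _) hi
    _ = d := hα
  · simp [Finsupp.notMem_support_iff.mp hi]

noncomputable instance (n d : ℕ) : Fintype (DegIdx n d) := by
  classical
  exact Fintype.ofInjective
    (fun α : DegIdx n d => (fun i => (⟨α.1 i, Nat.lt_succ_of_le (DegIdx.le d α i)⟩ : Fin (d+1))))
    (by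
      intro α β h
      apply Subtype.ext; apply Finsupp.ext; intro i
      have := congrFun h i
      simpa using congrArg Fin.val this)

lemma DegIdx.sum_eq (d : ℕ) (α : DegIdx n d) : ∑ i, α.1 i = d :=
  (Finsupp.sum_fintype _ _ (fun i => rfl)).symm.trans α.2

/-- The raw polynomial law built from a family of degree-`d` coefficients. -/
noncomputable def lawOfCoeffs (κ : Fin n → (M →ₗ[R] R)) (d : ℕ) (c : DegIdx n d → N) :
    RawLaw R M N :=
  fun S _ _ x => ∑ α : DegIdx n d, (∏ i, coordT κ S i x ^ α.1 i) ⊗ₜ[R] c α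

lemma lawOfCoeffs_mem (κ : Fin n → (M →ₗ[R] R)) (d : ℕ) (c : DegIdx n d → N) :
    lawOfCoeffs κ d c ∈ polyLawHomog R M N d := by
  constructor
  · intro S S' _ _ _ _ φ x
    show LinearMap.rTensor N φ.toLinearMap (∑ α : DegIdx n d, _) = _
    rw [map_sum]
    refine Finset.sum_congr rfl fun α _ => ?_
    rw [LinearMap.rTensor_tmul, AlgHom.toLinearMap_apply, map_prod]
    congr 1
    refine Finset.prod_congr rfl fun i _ => ?_
    rw [map_pow, coordT_natural]
  · intro S _ _ s x
    show (∑ α : DegIdx n d, _) = s ^ d • (∑ α : DegIdx n d, _)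
    rw [Finset.smul_sum]
    refine Finset.sum_congr rfl fun α _ => ?_
    rw [TensorProduct.smul_tmul']
    congr 1
    have h1 : ∀ i, coordT κ S i (s • x) ^ α.1 i = s ^ α.1 i * coordT κ S i x ^ α.1 i := by
      intro i; rw [coordT_smul, mul_pow]
    rw [Finset.prod_congr rfl fun i _ => h1 i, Finset.prod_mul_distrib,
      Finset.prod_pow_eq_pow_sum, DegIdx.sum_eq]
    exact (smul_eq_mul ..).symm

end Aux
section Aux2

variable {R : Type u} [CommRing R] {M N : Type u} [AddCommGroup M] [Module R M]
  [AddCommGroup N] [Module R N] {n : ℕ}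

lemma theta_monomial (γ : Fin n →₀ ℕ) (a : R) :
    MvPolynomial.aeval (fun i => Polynomial.C (MvPolynomial.X (R := R) i) * Polynomial.X)
        (MvPolynomial.monomial γ a)
      = Polynomial.C (MvPolynomial.monomial γ a) * Polynomial.X ^ (γ.sum fun _ k => k) := by
  classical
  rw [MvPolynomial.aeval_monomial]
  have h1 : (γ.prod fun i k => (Polynomial.C (MvPolynomial.X (R := R) i) * Polynomial.X) ^ k)
      = Polynomial.C (γ.prod fun i k => MvPolynomial.X (R := R) i ^ k)
        * Polynomial.X ^ (γ.sum fun _ k => k) := by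
    rw [Finsupp.prod_congr (g2 := fun i k => Polynomial.C (MvPolynomial.X (R := R) i ^ k)
        * Polynomial.X ^ k) (fun i _ => by simp [mul_pow, Polynomial.C_pow]),
      Finsupp.prod_mul, map_finsuppProd]
    congr 1
    rw [Finsupp.prod, Finsupp.sum, Finset.prod_pow_eq_pow_sum]
  rw [h1, ← mul_assoc]
  congr 1
  rw [MvPolynomial.monomial_eq, map_mul, Polynomial.algebraMap_apply, MvPolynomial.algebraMap_eq]

lemma theta_coeff (β : Fin n →₀ ℕ) (p : MvPolynomial (Fin n) R) :
    MvPolynomial.coeff β (Polynomial.coeff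
        (MvPolynomial.aeval (fun i => Polynomial.C (MvPolynomial.X (R := R) i) * Polynomial.X) p)
        (β.sum fun _ k => k))
      = MvPolynomial.coeff β p := by
  classical
  induction p using MvPolynomial.induction_on' with
  | monomial γ a =>
      rw [theta_monomial, Polynomial.coeff_C_mul, Polynomial.coeff_X_pow]
      by_cases h : β = γ
      · subst h; simp
      · have h2 : MvPolynomial.coeff β ((MvPolynomial.monomial γ) a) = 0 := by
          rw [MvPolynomial.coeff_monomial, if_neg (fun hh => h hh.symm)]
        rw [h2]
        split_ifs with hs
        · rw [mul_one]; exact h2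
        · rw [mul_zero, MvPolynomial.coeff_zero]
  | add p q hp hq => rw [map_add, Polynomial.coeff_add, MvPolynomial.coeff_add,
      MvPolynomial.coeff_add, hp, hq]

end Aux2

namespace MvPolynomial

variable {R : Type u} [CommRing R] {N : Type u} [AddCommGroup N] [Module R N] {σ : Type*}

open Classical in
/-- Port helper: removed from Mathlib. -/
noncomputable def scalarRTensor : MvPolynomial σ R ⊗[R] N ≃ₗ[R] (σ →₀ ℕ) →₀ N :=
  (LinearEquiv.rTensor N (AddMonoidAlgebra.coeffLinearEquiv R)) ≪≫ₗ
    TensorProduct.finsuppScalarLeft R N (σ →₀ ℕ)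

lemma scalarRTensor_apply_tmul_apply (p : MvPolynomial σ R) (n : N) (d : σ →₀ ℕ) :
    scalarRTensor (p ⊗ₜ[R] n) d = (coeff d p) • n := by
  simp only [scalarRTensor, LinearEquiv.trans_apply, LinearEquiv.rTensor_tmul,
    TensorProduct.finsuppScalarLeft_apply_tmul_apply]; rfl

lemma scalarRTensor_symm_apply_single (k : σ →₀ ℕ) (n : N) :
    scalarRTensor.symm (Finsupp.single k n) = (monomial k (1 : R)) ⊗ₜ[R] n :=
  by
    simp only [scalarRTensor, LinearEquiv.trans_symm, LinearEquiv.trans_apply,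
      TensorProduct.finsuppScalarLeft_symm_apply_single, LinearEquiv.rTensor_symm_tmul]
    rfl

end MvPolynomial

section Aux3

variable {R : Type u} [CommRing R] {M N : Type u} [AddCommGroup M] [Module R M]
  [AddCommGroup N] [Module R N] {n : ℕ}

open MvPolynomial in
/-- Coefficients of a homogeneous polynomial law at the generic element vanish
outside total degree `d`. -/
lemma homog_support (d : ℕ) (f : RawLaw R M N) (hnat : IsPolyLaw R M N f)
    (hhom : IsHomog R M N d f) (e : Fin n → M) (β : Fin n →₀ ℕ)
    (hβ : (β.sum fun _ k => k) ≠ d) :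
    MvPolynomial.scalarRTensor
      (f (MvPolynomial (Fin n) R) (∑ i, MvPolynomial.X i ⊗ₜ[R] e i)) β = 0 := by
  classical
  set S₀ := MvPolynomial (Fin n) R with hS₀
  set G : S₀ ⊗[R] M := ∑ i, MvPolynomial.X i ⊗ₜ[R] e i with hG
  set g : S₀ ⊗[R] N := f S₀ G with hg
  set ι : S₀ →ₐ[R] Polynomial S₀ := Polynomial.CAlgHom with hι
  set θ : S₀ →ₐ[R] Polynomial S₀ :=
    MvPolynomial.aeval (fun i => Polynomial.C (MvPolynomial.X i) * Polynomial.X) with hθ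
  -- the generic element scales
  have hGscale : LinearMap.rTensor M θ.toLinearMap G
      = Polynomial.X (R := S₀) • LinearMap.rTensor M ι.toLinearMap G := by
    rw [hG, map_sum, map_sum, Finset.smul_sum]
    refine Finset.sum_congr rfl fun i _ => ?_
    rw [LinearMap.rTensor_tmul, LinearMap.rTensor_tmul, TensorProduct.smul_tmul',
      AlgHom.toLinearMap_apply, AlgHom.toLinearMap_apply]
    congr 1
    rw [hθ, MvPolynomial.aeval_X, smul_eq_mul, hι]
    show Polynomial.C (MvPolynomial.X i) * Polynomial.X
      = Polynomial.X * Polynomial.C (MvPolynomial.X i)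
    ring
  -- the key scaling identity for the value at the generic element
  have key : LinearMap.rTensor N θ.toLinearMap g
      = Polynomial.X (R := S₀) ^ d • LinearMap.rTensor N ι.toLinearMap g := by
    rw [hg, hnat S₀ (Polynomial S₀) θ G, hGscale,
      hhom (Polynomial S₀) (Polynomial.X (R := S₀)) (LinearMap.rTensor M ι.toLinearMap G),
      ← hnat S₀ (Polynomial S₀) ι G]
  -- coefficient extraction functionals
  set Λ : S₀ ⊗[R] N →ₗ[R] N :=
    (Finsupp.lapply β) ∘ₗ (MvPolynomial.scalarRTensor (R := R) (N := N)).toLinearMap with hΛ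
  set ΛA : Polynomial S₀ ⊗[R] N →ₗ[R] N :=
    Λ ∘ₗ LinearMap.rTensor N
      ((Polynomial.lcoeff S₀ (β.sum fun _ k => k)).restrictScalars R) with hΛA
  have claimA : ∀ y : S₀ ⊗[R] N, ΛA (LinearMap.rTensor N θ.toLinearMap y) = Λ y := by
    intro y
    induction y using TensorProduct.induction_on with
    | zero => simp
    | tmul p nn =>
        rw [LinearMap.rTensor_tmul, AlgHom.toLinearMap_apply, hΛA, LinearMap.comp_apply,
          LinearMap.rTensor_tmul]
        simp only [LinearMap.coe_restrictScalars, Polynomial.lcoeff_apply]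
        rw [hΛ]
        simp only [LinearMap.comp_apply, LinearEquiv.coe_coe, Finsupp.lapply_apply]
        rw [MvPolynomial.scalarRTensor_apply_tmul_apply,
          MvPolynomial.scalarRTensor_apply_tmul_apply, theta_coeff]
    | add a b ha hb => rw [map_add, map_add, ha, hb, map_add]
  have claimB : ∀ y : S₀ ⊗[R] N,
      ΛA (Polynomial.X (R := S₀) ^ d • LinearMap.rTensor N ι.toLinearMap y) = 0 := by
    intro y
    induction y using TensorProduct.induction_on with
    | zero => simp
    | tmul p nn =>
        rw [LinearMap.rTensor_tmul, AlgHom.toLinearMap_apply, TensorProduct.smul_tmul', hΛA,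
          LinearMap.comp_apply, LinearMap.rTensor_tmul]
        simp only [LinearMap.coe_restrictScalars, Polynomial.lcoeff_apply]
        have : ι p = Polynomial.C p := rfl
        rw [this, smul_eq_mul, mul_comm, Polynomial.coeff_C_mul, Polynomial.coeff_X_pow,
          if_neg hβ, mul_zero, TensorProduct.zero_tmul, map_zero]
    | add a b ha hb =>
        rw [map_add, smul_add, map_add, ha, hb, add_zero]
  have : Λ g = 0 := by rw [← claimA g, key, claimB g]
  simpa [hΛ] using this

end Aux3
section Aux4

variable {R : Type u} [CommRing R] {M N : Type u} [AddCommGroup M] [Module R M]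
  [AddCommGroup N] [Module R N] {n : ℕ}

lemma rTensor_symm_sum (d : ℕ) (c : (Fin n →₀ ℕ) →₀ N)
    (hc : ∀ β ∈ c.support, (β.sum fun _ k => k) = d)
    (S : Type u) [CommRing S] [Algebra R S] (φ : MvPolynomial (Fin n) R →ₐ[R] S) :
    LinearMap.rTensor N φ.toLinearMap (MvPolynomial.scalarRTensor.symm c)
      = ∑ α : DegIdx n d, (∏ i, φ (MvPolynomial.X i) ^ α.1 i) ⊗ₜ[R] c α.1 := by
  classical
  have expand : LinearMap.rTensor N φ.toLinearMap (MvPolynomial.scalarRTensor.symm c)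
      = c.sum fun β nn => (∏ i, φ (MvPolynomial.X i) ^ β i) ⊗ₜ[R] nn := by
    conv_lhs => rw [← Finsupp.sum_single c]
    rw [map_finsuppSum, map_finsuppSum]
    refine Finsupp.sum_congr fun β _ => ?_
    rw [MvPolynomial.scalarRTensor_symm_apply_single, LinearMap.rTensor_tmul,
      AlgHom.toLinearMap_apply]
    congr 1
    rw [MvPolynomial.monomial_eq, map_mul, map_finsuppProd]
    simp only [map_one, one_mul]
    rw [Finsupp.prod_congr (g2 := fun i k => φ (MvPolynomial.X i) ^ k)
      (fun i _ => by rw [map_pow])]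
    exact Finsupp.prod_fintype _ _ (fun i => pow_zero _)
  rw [expand, Finsupp.sum]
  set emb : DegIdx n d ↪ (Fin n →₀ ℕ) := ⟨Subtype.val, Subtype.val_injective⟩ with hemb
  have hsub : c.support ⊆ Finset.univ.map emb := by
    intro β hβ
    rw [Finset.mem_map]
    exact ⟨⟨β, hc β hβ⟩, Finset.mem_univ _, rfl⟩
  rw [Finset.sum_subset hsub (fun β _ hβ => by
    rw [Finsupp.notMem_support_iff.mp hβ, TensorProduct.tmul_zero]),
    Finset.sum_map]
  rfl

open MvPolynomial in
/-- Reconstruction of a homogeneous polynomial law from its generic coefficients. -/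
lemma law_eq_sum_coeffs (κ : Fin n → (M →ₗ[R] R)) (e : Fin n → M)
    (hsec : ∀ m : M, ∑ i, κ i m • e i = m) (d : ℕ) (f : RawLaw R M N)
    (hnat : IsPolyLaw R M N f) (hhom : IsHomog R M N d f)
    (S : Type u) [CommRing S] [Algebra R S] (x : S ⊗[R] M) :
    f S x = ∑ α : DegIdx n d, (∏ i, coordT κ S i x ^ α.1 i) ⊗ₜ[R]
      (MvPolynomial.scalarRTensor
        (f (MvPolynomial (Fin n) R) (∑ i, MvPolynomial.X i ⊗ₜ[R] e i)) α.1) := by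
  classical
  set S₀ := MvPolynomial (Fin n) R with hS₀
  set G : S₀ ⊗[R] M := ∑ i, MvPolynomial.X i ⊗ₜ[R] e i with hG
  set g : S₀ ⊗[R] N := f S₀ G with hg
  set t : Fin n → S := fun i => coordT κ S i x with ht
  set φ : S₀ →ₐ[R] S := MvPolynomial.aeval t with hφ
  have h1 : LinearMap.rTensor M φ.toLinearMap G = x := by
    rw [hG, map_sum]
    have : ∀ i, LinearMap.rTensor M φ.toLinearMap (MvPolynomial.X i ⊗ₜ[R] e i)
        = t i ⊗ₜ[R] e i := by
      intro i
      rw [LinearMap.rTensor_tmul, AlgHom.toLinearMap_apply, hφ, MvPolynomial.aeval_X]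
    rw [Finset.sum_congr rfl fun i _ => this i, ht]
    exact sum_coordT κ e hsec S x
  have h2 : f S x = LinearMap.rTensor N φ.toLinearMap g := by
    rw [hg, hnat S₀ S φ G, h1]
  set c := MvPolynomial.scalarRTensor (R := R) (N := N) g with hc
  have hcs : ∀ β ∈ c.support, (β.sum fun _ k => k) = d := by
    intro β hβ
    by_contra hne
    exact (Finsupp.mem_support_iff.mp hβ) (homog_support d f hnat hhom e β hne)
  have h3 : MvPolynomial.scalarRTensor.symm c = g := LinearEquiv.symm_apply_apply _ _
  rw [h2, ← h3, rTensor_symm_sum d c hcs S φ]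
  refine Finset.sum_congr rfl fun α _ => ?_
  congr 1
  exact Finset.prod_congr rfl fun i _ => by rw [hφ, MvPolynomial.aeval_X]

end Aux4
section Aux5

variable {R : Type u} [CommRing R] {M N : Type u} [AddCommGroup M] [Module R M]
  [AddCommGroup N] [Module R N] {n : ℕ}

/-- The linear map building a homogeneous polynomial law out of coefficients. -/
noncomputable def psiMap (κ : Fin n → (M →ₗ[R] R)) (d : ℕ) :
    (DegIdx n d → N) →ₗ[R] polyLawHomog R M N d where
  toFun c := ⟨lawOfCoeffs κ d c, lawOfCoeffs_mem κ d c⟩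
  map_add' c c' := by
    apply Subtype.ext
    show lawOfCoeffs κ d (c + c') = lawOfCoeffs κ d c + lawOfCoeffs κ d c'
    funext S _inst _inst' x
    show (∑ α : DegIdx n d, (∏ i, coordT κ S i x ^ α.1 i) ⊗ₜ[R] (c α + c' α)) = _
    rw [Finset.sum_congr rfl fun (α : DegIdx n d) _ => TensorProduct.tmul_add
      (∏ i, coordT κ S i x ^ α.1 i) (c α) (c' α), Finset.sum_add_distrib]
    rfl
  map_smul' r c := by
    apply Subtype.ext
    show lawOfCoeffs κ d (r • c) = r • lawOfCoeffs κ d c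
    funext S _inst _inst' x
    show (∑ α : DegIdx n d, (∏ i, coordT κ S i x ^ α.1 i) ⊗ₜ[R] (r • c α)) = _
    rw [Finset.sum_congr rfl fun (α : DegIdx n d) _ => TensorProduct.tmul_smul r
      (∏ i, coordT κ S i x ^ α.1 i) (c α), ← Finset.smul_sum]
    rfl

/-- The linear map extracting the generic coefficients of a polynomial law. -/
noncomputable def phiMap (e : Fin n → M) (d : ℕ) :
    polyLawHomog R M N d →ₗ[R] (DegIdx n d → N) where
  toFun f := fun α => MvPolynomial.scalarRTensor
      (f.1 (MvPolynomial (Fin n) R) (∑ i, MvPolynomial.X i ⊗ₜ[R] e i)) α.1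
  map_add' f g := by
    funext α
    show MvPolynomial.scalarRTensor
        (f.1 (MvPolynomial (Fin n) R) (∑ i, MvPolynomial.X i ⊗ₜ[R] e i)
          + g.1 (MvPolynomial (Fin n) R) (∑ i, MvPolynomial.X i ⊗ₜ[R] e i)) α.1
      = MvPolynomial.scalarRTensor
          (f.1 (MvPolynomial (Fin n) R) (∑ i, MvPolynomial.X i ⊗ₜ[R] e i)) α.1
        + MvPolynomial.scalarRTensor
          (g.1 (MvPolynomial (Fin n) R) (∑ i, MvPolynomial.X i ⊗ₜ[R] e i)) α.1
    rw [map_add, Finsupp.add_apply]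
  map_smul' r f := by
    funext α
    show MvPolynomial.scalarRTensor
        (r • f.1 (MvPolynomial (Fin n) R) (∑ i, MvPolynomial.X i ⊗ₜ[R] e i)) α.1
      = r • MvPolynomial.scalarRTensor
          (f.1 (MvPolynomial (Fin n) R) (∑ i, MvPolynomial.X i ⊗ₜ[R] e i)) α.1
    rw [map_smul, Finsupp.smul_apply]

lemma psi_phi (κ : Fin n → (M →ₗ[R] R)) (e : Fin n → M)
    (hsec : ∀ m : M, ∑ i, κ i m • e i = m) (d : ℕ) (f : polyLawHomog R M N d) :
    psiMap κ d (phiMap e d f) = f := by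
  apply Subtype.ext
  funext S _inst _inst' x
  show (∑ α : DegIdx n d, (∏ i, coordT κ S i x ^ α.1 i) ⊗ₜ[R]
      (MvPolynomial.scalarRTensor
        (f.1 (MvPolynomial (Fin n) R) (∑ i, MvPolynomial.X i ⊗ₜ[R] e i)) α.1)) = f.1 S x
  exact (law_eq_sum_coeffs κ e hsec d f.1 f.2.1 f.2.2 S x).symm

end Aux5

theorem stmt_3 [Module.Finite R M] [Module.Projective R M]
    [Module.Finite R N] [Module.Projective R N] (d : ℕ) :
    Module.Finite R (polyLawHomog R M N d) ∧ Module.Projective R (polyLawHomog R M N d) := by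
  classical
  obtain ⟨n, π, hπ⟩ := Module.Finite.exists_fin' R M
  obtain ⟨σ', hσ⟩ := Module.projective_lifting_property π LinearMap.id hπ
  set κ : Fin n → (M →ₗ[R] R) := fun i => LinearMap.proj i ∘ₗ σ' with hκ
  set e : Fin n → M := fun i => π (Pi.single i 1) with he
  have hsec : ∀ m : M, ∑ i, κ i m • e i = m := by
    intro m
    have h1 : ∀ i : Fin n, κ i m • e i = π (Pi.single i (σ' m i)) := by
      intro i
      rw [he, ← map_smul]
      congr 1
      have : κ i m = σ' m i := rfl
      rw [this, ← Pi.single_smul, smul_eq_mul, mul_one]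
    rw [Finset.sum_congr rfl fun i _ => h1 i, ← map_sum, Finset.univ_sum_single]
    exact LinearMap.congr_fun hσ m
  haveI : Module.Projective R (DirectSum (DegIdx n d) (fun _ => N)) :=
    inferInstanceAs (Module.Projective R (Π₀ _ : DegIdx n d, N))
  haveI hproj : Module.Projective R (DegIdx n d → N) :=
    Module.Projective.of_equiv
      (DirectSum.linearEquivFunOnFintype R (DegIdx n d) (fun _ => N))
  constructor
  · exact Module.Finite.of_surjective (psiMap κ d)
      (fun f => ⟨phiMap e d f, psi_phi κ e hsec d f⟩)
  · exact Module.Projective.of_split (phiMap e d) (psiMap κ d)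
      (LinearMap.ext fun f => psi_phi κ e hsec d f)
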